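/- In the independent-dropping model on a finite connected graph, the profile chain is uniformly communicating to S₁ with communication time s = 3(|V|−1): there exists α' > 0 such that inf_{x ∈ S, x' ∈ S₁} M^s(x, x') ≥ α'. Specifically, for any starting profile with maximum at i and any target j, applying the i-ordering, then |V|−1 drops at j, then the j-ordering, yields x^{(j)}. -/

import Mathlib

-- n-step transition probabilities of a kernel on a countable space.
open Classical in
noncomputable def mpow {S : Type*} (M : S → S → ℝ) : ℕ → S → S → ℝ
  | 0 => fun x y => if x = y then 1 else 0
  | (n + 1) => fun x y => ∑' z, mpow M n x z * M z y

-- Adding a particle at `i` with screening, acting on (ℤ-valued) height profiles.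
open Classical in
noncomputable def dropZ {V : Type*} [Fintype V] (G : SimpleGraph V) (i : V) (x : V → ℤ) :
    V → ℤ :=
  fun j => if j = i then
    (Finset.univ.filter fun k => k = i ∨ G.Adj i k).sup'
      ⟨i, by simp⟩ x + 1
  else x j

-- Profile seen from the maximum: subtract the maximal height.
noncomputable def normP {V : Type*} [Fintype V] [Nonempty V] (x : V → ℤ) : V → ℤ :=
  fun j => x j - Finset.univ.sup' Finset.univ_nonempty x

-- Transition matrix of the profile chain for independent droppings with law `p`.
open Classical in
noncomputable def Mchain {V : Type*} [Fintype V] [Nonempty V] (G : SimpleGraph V)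
    (p : V → ℝ) (x y : V → ℤ) : ℝ :=
  ∑ i : V, if y = normP (dropZ G i x) then p i else 0

-- The profile `x⁽ⁱ⁾` obtained by dropping particles along the `i`-ordering `ord i`
-- starting from a profile with maximum at `i`.
noncomputable def xprof {V : Type*} [Fintype V] [Nonempty V] (G : SimpleGraph V)
    (ord : V → Fin (Fintype.card V - 1) → V) (i : V) : V → ℤ :=
  normP ((List.ofFn (ord i)).foldl (fun x v => dropZ G v x) (fun _ => 0))

section helpers

variable {V : Type*} [Fintype V] [Nonempty V] (G : SimpleGraph V)

/-- run a list of drops -/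
noncomputable def runD (L : List V) (x : V → ℤ) : V → ℤ :=
  L.foldl (fun y v => dropZ G v y) x

lemma runD_nil (x : V → ℤ) : runD G [] x = x := rfl

lemma runD_cons (v : V) (L : List V) (x : V → ℤ) :
    runD G (v :: L) x = runD G L (dropZ G v x) := rfl

lemma runD_append (L1 L2 : List V) (x : V → ℤ) :
    runD G (L1 ++ L2) x = runD G L2 (runD G L1 x) := by
  simp [runD, List.foldl_append]

lemma sup'_shift (x : V → ℤ) (c : ℤ) {s : Finset V} (h : s.Nonempty) :
    s.sup' h (fun j => x j + c) = s.sup' h x + c := by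
  have := Finset.comp_sup'_eq_sup'_comp (α := ℤ) (γ := ℤ) h (f := x)
    (fun a => a + c) (fun a b => (max_add_add_right a b c).symm)
  exact this.symm

lemma dropZ_shift (i : V) (x : V → ℤ) (c : ℤ) :
    dropZ G i (fun j => x j + c) = fun j => dropZ G i x j + c := by
  funext j
  by_cases hj : j = i
  · simp only [dropZ, if_pos hj]
    have key : ∀ (s : Finset V) (h : s.Nonempty),
        (s.sup' h fun j => x j + c) + 1 = s.sup' h x + 1 + c := fun s h => by
      rw [sup'_shift]; ring
    exact key _ _
  · simp only [dropZ, if_neg hj]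

lemma runD_shift (L : List V) (x : V → ℤ) (c : ℤ) :
    runD G L (fun j => x j + c) = fun j => runD G L x j + c := by
  induction L generalizing x with
  | nil => rfl
  | cons v L ih => rw [runD_cons, dropZ_shift, ih, runD_cons]

lemma normP_shift (x : V → ℤ) (c : ℤ) :
    normP (fun j => x j + c) = normP x := by
  funext j
  simp only [normP]
  rw [sup'_shift]
  ring

lemma normP_nonpos (x : V → ℤ) (j : V) : normP x j ≤ 0 := by
  simp only [normP, sub_nonpos]
  exact Finset.le_sup' x (Finset.mem_univ j)

lemma normP_of_max (x : V → ℤ) (hx : ∀ j, x j ≤ 0) (i : V) (hi : x i = 0) :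
    normP x = x := by
  have hsup : Finset.univ.sup' Finset.univ_nonempty x = 0 := by
    apply le_antisymm
    · exact Finset.sup'_le _ _ fun j _ => hx j
    · rw [← hi]; exact Finset.le_sup' x (Finset.mem_univ i)
  funext j
  simp [normP, hsup]

lemma normP_dropZ_normP (v : V) (x : V → ℤ) :
    normP (dropZ G v (normP x)) = normP (dropZ G v x) := by
  have : normP x = fun j => x j + (-(Finset.univ.sup' Finset.univ_nonempty x)) := by
    funext j; simp [normP]; ring
  rw [this, dropZ_shift, normP_shift]

lemma normP_runD_eq (L : List V) (x : V → ℤ) (c : ℤ) :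
    normP (runD G L (fun j => x j + c)) = normP (runD G L x) := by
  rw [runD_shift, normP_shift]


open Classical in
noncomputable def nbhd (i : V) : Finset V :=
  Finset.univ.filter fun k => k = i ∨ G.Adj i k

lemma self_mem_nbhd (i : V) : i ∈ nbhd G i := by
  simp [nbhd]

lemma mem_nbhd {i k : V} : k ∈ nbhd G i ↔ (k = i ∨ G.Adj i k) := by
  simp [nbhd]

lemma dropZ_self (i : V) (x : V → ℤ) :
    dropZ G i x i = (nbhd G i).sup' ⟨i, self_mem_nbhd G i⟩ x + 1 := by
  simp [dropZ, nbhd]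

lemma dropZ_ne (i : V) (x : V → ℤ) {j : V} (h : j ≠ i) : dropZ G i x j = x j := by
  simp [dropZ, h]

end helpers

section chain

variable {V : Type*} [Fintype V] [Nonempty V] (G : SimpleGraph V) (p : V → ℝ)

lemma Mchain_nonneg (hp : ∀ i, 0 < p i) (x y : V → ℤ) : 0 ≤ Mchain G p x y := by
  apply Finset.sum_nonneg
  intro i _
  split
  · exact (hp i).le
  · exact le_refl 0

lemma Mchain_step (hp : ∀ i, 0 < p i) (x : V → ℤ) (i : V) :
    p i ≤ Mchain G p x (normP (dropZ G i x)) := by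
  classical
  have h := Finset.single_le_sum (f := fun i' : V =>
      if normP (dropZ G i x) = normP (dropZ G i' x) then p i' else 0)
    (fun i' _ => by split <;> [exact (hp i').le; exact le_refl 0]) (Finset.mem_univ i)
  simpa [Mchain] using h

lemma Mchain_ne_zero (x y : V → ℤ) (h : Mchain G p x y ≠ 0) :
    ∃ i, y = normP (dropZ G i x) := by
  by_contra hc
  push_neg at hc
  apply h
  unfold Mchain
  apply Finset.sum_eq_zero
  intro i _
  rw [if_neg (hc i)]

lemma mpow_nonneg (hp : ∀ i, 0 < p i) (n : ℕ) (x y : V → ℤ) :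
    0 ≤ mpow (Mchain G p) n x y := by
  induction n generalizing x y with
  | zero => simp only [mpow]; split <;> norm_num
  | succ n ih =>
    simp only [mpow]
    exact tsum_nonneg fun z => mul_nonneg (ih x z) (Mchain_nonneg G p hp z y)

lemma mpow_support_finite (n : ℕ) (x : V → ℤ) :
    {z | mpow (Mchain G p) n x z ≠ 0}.Finite := by
  induction n with
  | zero =>
    apply Set.Finite.subset (Set.finite_singleton x)
    intro z hz
    simp only [mpow, Set.mem_setOf_eq] at hz
    by_contra hzx
    exact hz (if_neg (fun h => hzx h.symm))
  | succ n ih =>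
    apply Set.Finite.subset ((ih.biUnion (fun z _ =>
      Set.finite_range (fun i : V => normP (dropZ G i z)))))
    intro y hy
    simp only [mpow, Set.mem_setOf_eq] at hy
    have : ∃ z, mpow (Mchain G p) n x z * Mchain G p z y ≠ 0 := by
      by_contra hc
      push_neg at hc
      exact hy (by simp [hc])
    obtain ⟨z, hz⟩ := this
    have h1 : mpow (Mchain G p) n x z ≠ 0 := fun h => hz (by simp [h])
    have h2 : Mchain G p z y ≠ 0 := fun h => hz (by simp [h])
    obtain ⟨i, hi⟩ := Mchain_ne_zero G p z y h2
    exact Set.mem_biUnion h1 ⟨i, hi.symm⟩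

lemma mpow_succ_ge (hp : ∀ i, 0 < p i) (n : ℕ) (x z y : V → ℤ) :
    mpow (Mchain G p) n x z * Mchain G p z y ≤ mpow (Mchain G p) (n + 1) x y := by
  classical
  have hfin := mpow_support_finite G p n x
  have hsum : Summable (fun w => mpow (Mchain G p) n x w * Mchain G p w y) := by
    apply summable_of_ne_finset_zero (s := hfin.toFinset)
    intro w hw
    simp only [Set.Finite.mem_toFinset, Set.mem_setOf_eq, not_not] at hw
    simp [hw]
  have := Summable.le_tsum hsum z (fun w _ =>
    mul_nonneg (mpow_nonneg G p hp n x w) (Mchain_nonneg G p hp w y))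
  simpa [mpow] using this

end chain

section comb

set_option linter.unusedSectionVars false

variable {V : Type*} [Fintype V] [Nonempty V] (G : SimpleGraph V)

def goodL (G : SimpleGraph V) : List V → Set V → Prop
  | [], _ => True
  | v :: L, P => (∃ j ∈ P, G.Adj v j) ∧ goodL G L (insert v P)

lemma agree (L : List V) : ∀ (P : Set V) (u w : V → ℤ),
    (∀ j ∈ P, u j = w j) → (∀ j ∈ P, 0 ≤ u j) →
    (∀ j ∉ P, u j ≤ 0) → (∀ j ∉ P, w j ≤ 0) →
    goodL G L P →
    (∀ j, (j ∈ P ∨ j ∈ L) → runD G L u j = runD G L w j) := by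
  induction L with
  | nil =>
    intro P u w h1 _ _ _ _ j hj
    simp only [runD_nil]
    exact h1 j (hj.resolve_right (by simp))
  | cons v L ih =>
    intro P u w h1 h2 h3 h4 hgood j hj
    obtain ⟨⟨j₀, hj₀P, hadj⟩, hgood'⟩ := hgood
    have hj₀s : j₀ ∈ nbhd G v := (mem_nbhd G).mpr (Or.inr hadj)
    have hne : (nbhd G v).Nonempty := ⟨v, self_mem_nbhd G v⟩
    have hsupw0 : (0 : ℤ) ≤ (nbhd G v).sup' hne w := by
      calc (0:ℤ) ≤ w j₀ := (h1 j₀ hj₀P) ▸ h2 j₀ hj₀P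
      _ ≤ (nbhd G v).sup' hne w := Finset.le_sup' w hj₀s
    have hsupu0 : (0 : ℤ) ≤ (nbhd G v).sup' hne u :=
      le_trans (h2 j₀ hj₀P) (Finset.le_sup' u hj₀s)
    have hsup : (nbhd G v).sup' hne u = (nbhd G v).sup' hne w := by
      apply le_antisymm
      · apply Finset.sup'_le
        intro k hk
        by_cases hkP : k ∈ P
        · rw [h1 k hkP]; exact Finset.le_sup' w hk
        · exact le_trans (h3 k hkP) hsupw0
      · apply Finset.sup'_le
        intro k hk
        by_cases hkP : k ∈ P
        · rw [← h1 k hkP]; exact Finset.le_sup' u hk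
        · exact le_trans (h4 k hkP) hsupu0
    have key1 : ∀ k ∈ insert v P, dropZ G v u k = dropZ G v w k := by
      intro k _
      by_cases hk : k = v
      · subst hk
        rw [dropZ_self, dropZ_self, Finset.sup'_congr hne rfl (fun _ _ => rfl)]
        rw [hsup]
      · rw [dropZ_ne G v u hk, dropZ_ne G v w hk]
        rcases (Set.mem_insert_iff.mp ‹k ∈ insert v P›) with h | h
        · exact absurd h hk
        · exact h1 k h
    have key2 : ∀ k ∈ insert v P, (0:ℤ) ≤ dropZ G v u k := by
      intro k hk
      by_cases hkv : k = v
      · subst hkv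
        rw [dropZ_self]
        have := hsupu0
        omega
      · rw [dropZ_ne G v u hkv]
        exact h2 k ((Set.mem_insert_iff.mp hk).resolve_left hkv)
    have key3 : ∀ k ∉ insert v P, dropZ G v u k ≤ 0 := by
      intro k hk
      have hkv : k ≠ v := fun h => hk (h ▸ Set.mem_insert k P)
      rw [dropZ_ne G v u hkv]
      exact h3 k (fun h => hk (Set.mem_insert_of_mem v h))
    have key4 : ∀ k ∉ insert v P, dropZ G v w k ≤ 0 := by
      intro k hk
      have hkv : k ≠ v := fun h => hk (h ▸ Set.mem_insert k P)
      rw [dropZ_ne G v w hkv]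
      exact h4 k (fun h => hk (Set.mem_insert_of_mem v h))
    rw [runD_cons, runD_cons]
    apply ih (insert v P) _ _ key1 key2 key3 key4 hgood'
    rcases hj with h | h
    · exact Or.inl (Set.mem_insert_of_mem v h)
    · rcases List.mem_cons.mp h with h | h
      · exact Or.inl (h ▸ Set.mem_insert j P)
      · exact Or.inr h

lemma goodL_of_get : ∀ (L : List V) (P : Set V),
    (∀ k (hk : k < L.length), ∃ j, (j ∈ P ∨ ∃ l, ∃ hl : l < k, L.get ⟨l, hl.trans hk⟩ = j) ∧
      G.Adj (L.get ⟨k, hk⟩) j) →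
    goodL G L P := by
  intro L
  induction L with
  | nil => intro P _; trivial
  | cons v L ih =>
    intro P h
    constructor
    · obtain ⟨j, hj, hadj⟩ := h 0 (by simp)
      refine ⟨j, ?_, by simpa using hadj⟩
      rcases hj with h | ⟨l, hl, _⟩
      · exact h
      · omega
    · apply ih
      intro k hk
      obtain ⟨j, hj, hadj⟩ := h (k + 1) (by simpa using Nat.succ_lt_succ hk)
      refine ⟨j, ?_, by simpa using hadj⟩
      rcases hj with h | ⟨l, hl, hget⟩
      · exact Or.inl (Set.mem_insert_of_mem v h)
      · rcases Nat.eq_zero_or_pos l with rfl | hpos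
        · simp only [List.get] at hget
          exact Or.inl (hget ▸ Set.mem_insert _ P)
        · obtain ⟨l', rfl⟩ := Nat.exists_eq_succ_of_ne_zero hpos.ne'
          refine Or.inr ⟨l', Nat.succ_lt_succ_iff.mp hl, ?_⟩
          simpa using hget

end comb

section walk

set_option linter.unusedSectionVars false

variable {V : Type*} [Fintype V] [Nonempty V] (G : SimpleGraph V) (p : V → ℝ)

lemma walk_bound (hp : ∀ i, 0 < p i) (pm : ℝ) (hpm : 0 < pm) (hpmle : ∀ i, pm ≤ p i)
    (L : List V) (x : V → ℤ) (hx : normP x = x) :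
    pm ^ L.length ≤ mpow (Mchain G p) L.length x (normP (runD G L x)) := by
  induction L using List.reverseRecOn with
  | nil =>
    simp only [runD_nil, List.length_nil, pow_zero, hx]
    simp [mpow]
  | append_singleton L v ih =>
    rw [List.length_append, List.length_singleton, runD_append]
    have hmid := ih
    set mid := normP (runD G L x) with hmid_def
    have htgt : normP (runD G [v] (runD G L x)) = normP (dropZ G v mid) := by
      rw [hmid_def, normP_dropZ_normP]
      rfl
    rw [htgt]
    calc pm ^ (L.length + 1) = pm ^ L.length * pm := by ring
    _ ≤ mpow (Mchain G p) L.length x mid * Mchain G p mid (normP (dropZ G v mid)) := by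
        apply mul_le_mul hmid (le_trans (hpmle v) (Mchain_step G p hp mid v)) hpm.le
        exact mpow_nonneg G p hp L.length x mid
    _ ≤ mpow (Mchain G p) (L.length + 1) x (normP (dropZ G v mid)) :=
        mpow_succ_ge G p hp L.length x mid _

end walk

section runfacts

set_option linter.unusedSectionVars false

variable {V : Type*} [Fintype V] [Nonempty V] (G : SimpleGraph V)

lemma runD_nonneg (L : List V) (x : V → ℤ) (hx : ∀ j, 0 ≤ x j) :
    ∀ j, 0 ≤ runD G L x j := by
  induction L generalizing x with
  | nil => exact hx
  | cons v L ih =>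
    rw [runD_cons]
    apply ih
    intro j
    by_cases hj : j = v
    · subst hj
      rw [dropZ_self]
      have : x j ≤ (nbhd G j).sup' ⟨j, self_mem_nbhd G j⟩ x :=
        Finset.le_sup' x (self_mem_nbhd G j)
      have := hx j
      omega
    · rw [dropZ_ne G v x hj]; exact hx j

lemma runD_sup_le (L : List V) (x : V → ℤ) :
    ∀ j, runD G L x j ≤ Finset.univ.sup' Finset.univ_nonempty x + L.length := by
  induction L generalizing x with
  | nil =>
    intro j
    have := Finset.le_sup' x (Finset.mem_univ j)
    simp only [runD_nil, List.length_nil, Nat.cast_zero, add_zero]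
    exact this
  | cons v L ih =>
    intro j
    rw [runD_cons]
    have h1 : ∀ k, dropZ G v x k ≤ Finset.univ.sup' Finset.univ_nonempty x + 1 := by
      intro k
      by_cases hk : k = v
      · subst hk
        rw [dropZ_self]
        have : (nbhd G k).sup' ⟨k, self_mem_nbhd G k⟩ x ≤
            Finset.univ.sup' Finset.univ_nonempty x := by
          apply Finset.sup'_le
          intro b _
          exact Finset.le_sup' x (Finset.mem_univ b)
        omega
      · rw [dropZ_ne G v x hk]
        have := Finset.le_sup' x (Finset.mem_univ k)
        omega
    have h2 : Finset.univ.sup' Finset.univ_nonempty (dropZ G v x) ≤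
        Finset.univ.sup' Finset.univ_nonempty x + 1 :=
      Finset.sup'_le _ _ fun b _ => h1 b
    have := ih (dropZ G v x) j
    simp only [List.length_cons]
    omega

lemma runD_replicate_ne (m : ℕ) (i : V) (x : V → ℤ) {j : V} (hj : j ≠ i) :
    runD G (List.replicate m i) x j = x j := by
  induction m generalizing x with
  | zero => rfl
  | succ m ih =>
    rw [List.replicate_succ, runD_cons, ih, dropZ_ne G i x hj]

lemma runD_replicate_self (m : ℕ) (hm : 1 ≤ m) (i : V) (x : V → ℤ) :
    (nbhd G i).sup' ⟨i, self_mem_nbhd G i⟩ x + m ≤ runD G (List.replicate m i) x i := by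
  induction m with
  | zero => omega
  | succ m ih =>
    rw [List.replicate_succ', runD_append]
    rcases Nat.eq_zero_or_pos m with rfl | hpos
    · simp only [List.replicate_zero, runD_nil, runD_cons]
      rw [dropZ_self]
      push_cast
      omega
    · have hih := ih hpos
      set y := runD G (List.replicate m i) x with hy
      have : runD G [i] y i = (nbhd G i).sup' ⟨i, self_mem_nbhd G i⟩ y + 1 := by
        simp only [runD]
        rw [List.foldl_cons, List.foldl_nil, dropZ_self]
      rw [this]
      have : y i ≤ (nbhd G i).sup' ⟨i, self_mem_nbhd G i⟩ y :=
        Finset.le_sup' y (self_mem_nbhd G i)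
      push_cast
      omega

end runfacts

/-- The profile chain of the independent-dropping model is uniformly communicating to
`S₁ = {x⁽ⁱ⁾ : i ∈ V}` with communication time `s = 3(|V|−1)`: there is `α' > 0` with
`M^s(x, x') ≥ α'` for every profile `x` and every `x' ∈ S₁`. -/
theorem stmt14 {V : Type*} [Fintype V] [DecidableEq V] [Nonempty V] (G : SimpleGraph V)
    (hconn : G.Connected)
    (p : V → ℝ) (hp : ∀ i, 0 < p i) (hp1 : ∑ i : V, p i = 1)
    (ord : V → Fin (Fintype.card V - 1) → V)
    (hinj : ∀ i, Function.Injective (ord i))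
    (hrange : ∀ i, Set.range (ord i) = {i}ᶜ)
    (hord : ∀ i k, ∃ j, (j = i ∨ ∃ l, l < k ∧ ord i l = j) ∧ G.Adj (ord i k) j) :
    ∃ α' : ℝ, 0 < α' ∧
      ∀ x : V → ℤ, (∀ j, x j ≤ 0) → (∃ j, x j = 0) →
        ∀ i : V, α' ≤ mpow (Mchain G p) (3 * (Fintype.card V - 1)) x (xprof G ord i) := by
  set pmin : ℝ := Finset.univ.inf' Finset.univ_nonempty p with hpmin
  have hpmin_pos : 0 < pmin := by
    rw [hpmin, Finset.lt_inf'_iff]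
    exact fun i _ => hp i
  have hpmin_le : ∀ i, pmin ≤ p i := fun i => Finset.inf'_le p (Finset.mem_univ i)
  refine ⟨pmin ^ (3 * (Fintype.card V - 1)), pow_pos hpmin_pos _, ?_⟩
  intro x hxle ⟨i₀, hi₀⟩ i
  -- the good-ordering fact
  have hgood : ∀ i' : V, goodL G (List.ofFn (ord i')) {i'} := by
    intro i'
    apply goodL_of_get
    intro k hk
    have hk' : k < Fintype.card V - 1 := by simpa using hk
    obtain ⟨j, hj, hadj⟩ := hord i' ⟨k, hk'⟩
    have hgk : (List.ofFn (ord i')).get ⟨k, hk⟩ = ord i' ⟨k, hk'⟩ := by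
      rw [List.get_ofFn]
      congr 1
      all_goals exact Fin.ext (by simp)
    refine ⟨j, ?_, by rw [hgk]; exact hadj⟩
    rcases hj with h | ⟨l, hl, hlj⟩
    · exact Or.inl h
    · have hlk : l.val < k := hl
      refine Or.inr ⟨l.val, hlk, ?_⟩
      have hgl : (List.ofFn (ord i')).get ⟨l.val, hlk.trans hk⟩ = ord i' l := by
        rw [List.get_ofFn]
        congr 1
        all_goals exact Fin.ext (by simp)
      rw [hgl, hlj]
  -- applying the ordering from any profile with max at i' gives the same as from 0
  have hagree : ∀ (i' : V) (u : V → ℤ), (∀ j, u j ≤ 0) → u i' = 0 →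
      runD G (List.ofFn (ord i')) u = runD G (List.ofFn (ord i')) (fun _ => 0) := by
    intro i' u hu hui
    funext j
    apply agree G (List.ofFn (ord i')) {i'} u (fun _ => 0)
      (fun j hj => by rw [Set.mem_singleton_iff.mp hj, hui])
      (fun j hj => by rw [Set.mem_singleton_iff.mp hj, hui])
      (fun j _ => hu j) (fun j _ => le_refl 0) (hgood i')
    by_cases hji : j = i'
    · exact Or.inl hji
    · right
      rw [List.mem_ofFn]
      have : j ∈ Set.range (ord i') := by
        rw [hrange i']
        exact hji
      exact this
  rcases Nat.lt_or_ge (Fintype.card V) 2 with hn1 | hn2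
  · -- |V| = 1 : singleton graph
    have hpos : 1 ≤ Fintype.card V := Fintype.card_pos
    have hcard : Fintype.card V = 1 := by omega
    have hsub : Subsingleton V := Fintype.card_le_one_iff_subsingleton.mp (by omega)
    have hxx : x = xprof G ord i := by
      have hL : List.ofFn (ord i) = [] :=
        List.eq_nil_of_length_eq_zero (by simp [hcard])
      have hxp : xprof G ord i = normP (fun _ => 0) := by
        unfold xprof
        rw [show ((List.ofFn (ord i)).foldl (fun x v => dropZ G v x) (fun _ => 0))
            = runD G (List.ofFn (ord i)) (fun _ => 0) from rfl, hL, runD_nil]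
      rw [hxp, normP_of_max (fun _ => 0) (fun _ => le_refl 0) i rfl]
      funext j
      rw [hsub.allEq j i₀, hi₀]
    have h30 : 3 * (Fintype.card V - 1) = 0 := by rw [hcard]
    rw [h30, pow_zero]
    simp only [mpow]
    rw [if_pos hxx]
  · -- main case : |V| ≥ 2
    set L1 := List.ofFn (ord i₀) with hL1
    set L2 := List.replicate (Fintype.card V - 1) i with hL2
    set L3 := List.ofFn (ord i) with hL3
    set Lf := L1 ++ (L2 ++ L3) with hLf
    have hlen : Lf.length = 3 * (Fintype.card V - 1) := by
      simp only [hLf, hL1, hL2, hL3, List.length_append, List.length_ofFn,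
        List.length_replicate]
      omega
    -- step A
    have hA : runD G L1 x = runD G L1 (fun _ => 0) := hagree i₀ x hxle hi₀
    set R0 := runD G L1 (fun _ => 0) with hR0
    set c := Finset.univ.sup' Finset.univ_nonempty R0 with hc
    set y₀ := normP R0 with hy₀
    have hR0y : R0 = fun j => y₀ j + c := by
      funext j
      simp [hy₀, normP, hc]
    have hy₀le : ∀ j, y₀ j ≤ 0 := fun j => normP_nonpos R0 j
    have hR0nonneg : ∀ j, 0 ≤ R0 j := by
      have := runD_nonneg G L1 (fun _ => 0) (fun _ => le_refl 0)
      rw [← hR0] at this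
      exact this
    have hcle : c ≤ (Fintype.card V - 1 : ℕ) := by
      rw [hc]
      apply Finset.sup'_le
      intro j _
      have hb := runD_sup_le G L1 (fun _ => 0) j
      rw [← hR0] at hb
      have hz0 : Finset.univ.sup' Finset.univ_nonempty (fun _ : V => (0:ℤ)) = 0 := by
        apply le_antisymm
        · exact Finset.sup'_le _ _ fun _ _ => le_refl 0
        · simpa using Finset.le_sup' (fun _ : V => (0:ℤ)) (Finset.mem_univ i)
      rw [hz0] at hb
      have hlen1 : L1.length = Fintype.card V - 1 := by simp [hL1]
      rw [hlen1] at hb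
      omega
    have hy₀i : -(↑(Fintype.card V - 1):ℤ) ≤ y₀ i := by
      have h1 : y₀ i = R0 i - c := rfl
      have h2 := hR0nonneg i
      omega
    -- step B
    set w := runD G L2 y₀ with hw
    have hwne : ∀ j, j ≠ i → w j = y₀ j := by
      intro j hj
      have := runD_replicate_ne G (Fintype.card V - 1) i y₀ hj
      rw [← hL2] at this
      rw [hw, this]
    have hwi : 0 ≤ w i := by
      have h1 : 1 ≤ Fintype.card V - 1 := by omega
      have h2 := runD_replicate_self G (Fintype.card V - 1) h1 i y₀
      have h3 : y₀ i ≤ (nbhd G i).sup' ⟨i, self_mem_nbhd G i⟩ y₀ :=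
        Finset.le_sup' y₀ (self_mem_nbhd G i)
      rw [← hL2, ← hw] at h2
      omega
    have hsupw : Finset.univ.sup' Finset.univ_nonempty w = w i := by
      apply le_antisymm
      · apply Finset.sup'_le
        intro j _
        by_cases hj : j = i
        · rw [hj]
        · rw [hwne j hj]
          exact le_trans (hy₀le j) hwi
      · exact Finset.le_sup' w (Finset.mem_univ i)
    set z := normP w with hz
    have hzi : z i = 0 := by
      simp [hz, normP, hsupw]
    have hzle : ∀ j, z j ≤ 0 := fun j => normP_nonpos w j
    have hwz : w = fun j => z j + w i := by
      funext j
      simp [hz, normP, hsupw]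
    -- step C
    have hC : runD G L3 z = runD G L3 (fun _ => 0) := hagree i z hzle hzi
    -- put everything together
    have e2 : runD G Lf x = fun j => runD G L3 (fun _ => 0) j + (w i + c) := by
      rw [hLf, runD_append, runD_append, hA, hR0y, runD_shift, runD_shift, ← hw]
      conv_lhs => rw [hwz]
      rw [runD_shift, hC]
      funext j
      ring
    have hfinal : normP (runD G Lf x) = xprof G ord i := by
      rw [e2, normP_shift]
      rfl
    have hnx : normP x = x := normP_of_max x hxle i₀ hi₀
    have hwb := walk_bound G p hp pmin hpmin_pos hpmin_le Lf x hnx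
    rw [hfinal, hlen] at hwb
    exact hwb
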